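/- The second derivative of h₁(x) = (2/π)·arcsin((2σᵣ²x + 2σᵢ²)/(1 + 2σᵣ²x + 2σᵢ²)) equals −16σᵣ⁴(1 + 3σᵣ²x + 3σᵢ²) / (π(1 + 2σᵣ²x + 2σᵢ²)²(1 + 4σᵣ²x + 4σᵢ²)^{3/2}), which is strictly negative for all x ≥ 0 when σᵣ > 0; hence h₁ is strictly concave on [0,1]. -/

import Mathlib

open Real Set

theorem stmt_1 (σr σi : ℝ) (hr : 0 < σr) (hi : 0 ≤ σi)
    (h₁ : ℝ → ℝ)
    (hdef : ∀ x, h₁ x =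
      2 / π * Real.arcsin ((2 * σr ^ 2 * x + 2 * σi ^ 2) / (1 + 2 * σr ^ 2 * x + 2 * σi ^ 2))) :
    (∀ x : ℝ, 0 ≤ x →
      deriv (deriv h₁) x =
        -(16 * σr ^ 4 * (1 + 3 * σr ^ 2 * x + 3 * σi ^ 2)) /
          (π * (1 + 2 * σr ^ 2 * x + 2 * σi ^ 2) ^ 2 *
            (1 + 4 * σr ^ 2 * x + 4 * σi ^ 2) ^ ((3 : ℝ) / 2)) ∧
      deriv (deriv h₁) x < 0) ∧
    StrictConcaveOn ℝ (Set.Icc (0 : ℝ) 1) h₁ := by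
  have hπ : (0:ℝ) < π := Real.pi_pos
  have heq : h₁ = fun x => 2 / π * Real.arcsin ((2 * σr ^ 2 * x + 2 * σi ^ 2) / (1 + 2 * σr ^ 2 * x + 2 * σi ^ 2)) := funext hdef
  subst heq
  set a := σr ^ 2 with ha_def
  set b := σi ^ 2 with hb_def
  have ha : 0 < a := by positivity
  have hb : 0 ≤ b := by positivity
  have ha4 : σr ^ 4 = a ^ 2 := by rw [ha_def]; ring
  -- first derivative
  have key : ∀ x : ℝ, 0 < 1 + 4*a*x + 4*b →
      HasDerivAt (fun x => 2 / π * Real.arcsin ((2 * a * x + 2 * b) / (1 + 2 * a * x + 2 * b)))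
        (4*a / (π * (1 + 2*a*x + 2*b) * Real.sqrt (1 + 4*a*x + 4*b))) x := by
    intro x ht
    have hs : 0 < 1 + 2*a*x + 2*b := by nlinarith
    have hst : Real.sqrt (1 + 4*a*x + 4*b) > 0 := Real.sqrt_pos.mpr ht
    have h1 : HasDerivAt (fun x : ℝ => 2*a*x + 2*b) (2*a) x := by
      simpa using ((hasDerivAt_id x).const_mul (2*a)).add_const (2*b)
    have h2 : HasDerivAt (fun x : ℝ => 1 + 2*a*x + 2*b) (2*a) x := by
      have := (((hasDerivAt_id x).const_mul (2*a)).const_add 1).add_const (2*b)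
      simpa [mul_comm] using this
    have hu : HasDerivAt (fun x : ℝ => (2*a*x + 2*b) / (1 + 2*a*x + 2*b))
        (2*a / (1 + 2*a*x + 2*b)^2) x := by
      have := h1.div h2 hs.ne'
      refine this.congr_deriv ?_
      symm
      field_simp
      ring
    set u := (2*a*x + 2*b) / (1 + 2*a*x + 2*b) with hu_def
    have h1u : 1 - u^2 = (1 + 4*a*x + 4*b) / (1 + 2*a*x + 2*b)^2 := by
      rw [hu_def]; field_simp; ring
    have h1u' : 0 < 1 - u^2 := by rw [h1u]; positivity
    have hne1 : u ≠ -1 := by intro h; rw [h] at h1u'; norm_num at h1u'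
    have hne2 : u ≠ 1 := by intro h; rw [h] at h1u'; norm_num at h1u'
    have harc := (Real.hasDerivAt_arcsin hne1 hne2).comp x hu
    have := harc.const_mul (2/π)
    refine this.congr_deriv ?_
    symm
    rw [h1u, Real.sqrt_div ht.le, Real.sqrt_sq hs.le]
    field_simp
    ring
  -- second derivative of the explicit first derivative
  have key2 : ∀ x : ℝ, 0 < 1 + 4*a*x + 4*b →
      HasDerivAt (fun x => 4*a / (π * (1 + 2*a*x + 2*b) * Real.sqrt (1 + 4*a*x + 4*b)))
        (-(16 * a^2 * (1 + 3*a*x + 3*b)) /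
          (π * (1 + 2*a*x + 2*b)^2 * (1 + 4*a*x + 4*b) ^ ((3:ℝ)/2))) x := by
    intro x ht
    have hs : 0 < 1 + 2*a*x + 2*b := by nlinarith
    have hst : Real.sqrt (1 + 4*a*x + 4*b) > 0 := Real.sqrt_pos.mpr ht
    have htf : HasDerivAt (fun x : ℝ => 1 + 4*a*x + 4*b) (4*a) x := by
      have := (((hasDerivAt_id x).const_mul (4*a)).const_add 1).add_const (4*b)
      simpa [mul_comm] using this
    have hsq : HasDerivAt (fun x : ℝ => Real.sqrt (1 + 4*a*x + 4*b))
        (1 / (2 * Real.sqrt (1 + 4*a*x + 4*b)) * (4*a)) x :=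
      (Real.hasDerivAt_sqrt ht.ne').comp x htf
    have h2 : HasDerivAt (fun x : ℝ => 1 + 2*a*x + 2*b) (2*a) x := by
      have := (((hasDerivAt_id x).const_mul (2*a)).const_add 1).add_const (2*b)
      simpa [mul_comm] using this
    have hden : HasDerivAt (fun x : ℝ => π * (1 + 2*a*x + 2*b) * Real.sqrt (1 + 4*a*x + 4*b))
        (π * (2*a) * Real.sqrt (1 + 4*a*x + 4*b)
          + π * (1 + 2*a*x + 2*b) * (1 / (2 * Real.sqrt (1 + 4*a*x + 4*b)) * (4*a))) x :=
      (h2.const_mul π).mul hsq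
    have hdne : π * (1 + 2*a*x + 2*b) * Real.sqrt (1 + 4*a*x + 4*b) ≠ 0 := by positivity
    have := (hasDerivAt_const x (4*a)).div hden hdne
    refine this.congr_deriv ?_
    symm
    have hrt : (1 + 4*a*x + 4*b) ^ ((3:ℝ)/2)
        = (1 + 4*a*x + 4*b) * Real.sqrt (1 + 4*a*x + 4*b) := by
      rw [show (3:ℝ)/2 = 1 + 1/2 by norm_num, Real.rpow_add ht, Real.rpow_one,
        ← Real.sqrt_eq_rpow]
    rw [hrt]
    have hmul : Real.sqrt (1 + 4*a*x + 4*b) * Real.sqrt (1 + 4*a*x + 4*b) = 1 + 4*a*x + 4*b :=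
      Real.mul_self_sqrt ht.le
    set s := Real.sqrt (1 + 4*a*x + 4*b) with hs_def
    have e1 : 1 + 4*a*x + 4*b = s^2 := by rw [hs_def, Real.sq_sqrt ht.le]
    have e2 : 1 + 2*a*x + 2*b = (s^2+1)/2 := by linarith
    have e3 : 1 + 3*a*x + 3*b = (3*s^2+1)/4 := by linarith
    rw [e2, e3, e1]
    field_simp
    ring
  -- deriv h₁ equals g on the open set
  have hopen : IsOpen {x : ℝ | 0 < 1 + 4*a*x + 4*b} :=
    isOpen_lt continuous_const (by continuity)
  have hderiv_eq : ∀ x : ℝ, 0 < 1 + 4*a*x + 4*b →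
      deriv (deriv (fun x => 2 / π * Real.arcsin ((2 * a * x + 2 * b) / (1 + 2 * a * x + 2 * b)))) x
        = -(16 * a^2 * (1 + 3*a*x + 3*b)) /
          (π * (1 + 2*a*x + 2*b)^2 * (1 + 4*a*x + 4*b) ^ ((3:ℝ)/2)) := by
    intro x ht
    have hev : deriv (fun x => 2 / π * Real.arcsin ((2 * a * x + 2 * b) / (1 + 2 * a * x + 2 * b)))
        =ᶠ[nhds x] fun x => 4*a / (π * (1 + 2*a*x + 2*b) * Real.sqrt (1 + 4*a*x + 4*b)) := by
      filter_upwards [hopen.mem_nhds ht] with y hy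
      exact (key y hy).deriv
    rw [hev.deriv_eq]
    exact (key2 x ht).deriv
  have htpos : ∀ x : ℝ, 0 ≤ x → 0 < 1 + 4*a*x + 4*b := by
    intro x hx; nlinarith
  constructor
  · intro x hx
    have ht := htpos x hx
    have hs : 0 < 1 + 2*a*x + 2*b := by nlinarith
    have hform := hderiv_eq x ht
    rw [ha4]
    refine ⟨hform, ?_⟩
    rw [hform]
    apply div_neg_of_neg_of_pos
    · nlinarith
    · have : (0:ℝ) < (1 + 4*a*x + 4*b) ^ ((3:ℝ)/2) := Real.rpow_pos_of_pos ht _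
      positivity
  · apply strictConcaveOn_of_deriv2_neg (convex_Icc 0 1)
    · intro x hx
      exact (key x (htpos x hx.1)).continuousAt.continuousWithinAt
    · intro x hx
      rw [interior_Icc] at hx
      have ht := htpos x hx.1.le
      have hs : 0 < 1 + 2*a*x + 2*b := by nlinarith
      simp only [Function.iterate_succ_apply', Function.iterate_zero_apply]
      rw [hderiv_eq x ht]
      apply div_neg_of_neg_of_pos
      · nlinarith
      · have : (0:ℝ) < (1 + 4*a*x + 4*b) ^ ((3:ℝ)/2) := Real.rpow_pos_of_pos ht _
        positivity
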